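/- Let 𝒞 be a Hamiltonian cycle of an edge-weighted graph and suppose that for every k' < k there is no improving k'-move on 𝒞. Then no improving k-swap fits into a reducible connection k-pattern. -/

import Mathlib

/-!  Connection patterns for `k`-opt swaps (1-indexed: deleted edges are indexed by
`[k] = Finset.Icc 1 k`, pattern vertices `2i-1` and `2i` are the left and right endpoints
of the `i`-th deleted edge). -/

/-- The pattern vertices corresponding to an index set `X ⊆ [k]`:
`{2i−1, 2i : i ∈ X}`. -/
def pvs (X : Finset ℕ) : Finset ℕ := X.biUnion fun i => {2 * i - 1, 2 * i}

/-- `N` is a perfect matching on the vertex set `S`: its edges are loopless, lie inside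
`S`, and every vertex of `S` is on exactly one edge of `N`. -/
def IsMatchingOn (N : Finset (Sym2 ℕ)) (S : Finset ℕ) : Prop :=
  (∀ e ∈ N, ¬ e.IsDiag) ∧ (∀ e ∈ N, ∀ v ∈ e, v ∈ S) ∧
  (∀ v ∈ S, ∃! e, e ∈ N ∧ v ∈ e)

/-- The cyclic successor of `i` in the finite set `X`. -/
noncomputable def nextIn (X : Finset ℕ) (i : ℕ) : ℕ :=
  if h : (X.filter fun j => i < j).Nonempty then (X.filter fun j => i < j).min' h
  else if h' : X.Nonempty then X.min' h' else 0

/-- The "segment" edges of an index set `X`: for each `i ∈ X`, joining the right endpoint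
`2i` of the `i`-th deleted edge to the left endpoint `2·nextIn X i − 1` of the cyclically
next deleted edge (representing the path of the Hamiltonian cycle between them). -/
noncomputable def segEdges (X : Finset ℕ) : Finset (Sym2 ℕ) :=
  X.image fun i => s(2 * i, 2 * nextIn X i - 1)

/-- The sub-pattern `M[X]` of `M`: the edges of `M` lying inside `{2i−1, 2i : i ∈ X}`. -/
def subPat (M : Finset (Sym2 ℕ)) (X : Finset ℕ) : Finset (Sym2 ℕ) :=
  M.filter fun e => e ∈ (pvs X).sym2

/-- The connection pattern `N` on index set `X` is feasible: a swap fitting into it turns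
a Hamiltonian cycle into a single Hamiltonian cycle again.  Intrinsically: the (2-regular)
graph on `{2i−1, 2i : i ∈ X}` consisting of the matching `N` together with the segment
edges of `X` is a single cycle, i.e. connected. -/
def FeasiblePat (N : Finset (Sym2 ℕ)) (X : Finset ℕ) : Prop :=
  ∀ u ∈ pvs X, ∀ v ∈ pvs X,
    (SimpleGraph.fromEdgeSet ((N ∪ segEdges X : Finset (Sym2 ℕ)) : Set (Sym2 ℕ))).Reachable u v

/-- The connection pattern `N` on index set `X` is sequential:
`N ∪ {{2i−1, 2i} : i ∈ X}` forms a single (simple) cycle. -/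
def SequentialPat (N : Finset (Sym2 ℕ)) (X : Finset ℕ) : Prop :=
  ∀ u ∈ pvs X, ∀ v ∈ pvs X,
    (SimpleGraph.fromEdgeSet
      ((N ∪ X.image fun i => s(2 * i - 1, 2 * i) : Finset (Sym2 ℕ)) : Set (Sym2 ℕ))).Reachable u v

/-- A connection `k`-pattern `M` is reducible if it decomposes into two feasible patterns
(two moves). -/
def Reducible (M : Finset (Sym2 ℕ)) (k : ℕ) : Prop :=
  ∃ X Y : Finset ℕ, X ∪ Y = Finset.Icc 1 k ∧ Disjoint X Y ∧ X.Nonempty ∧ Y.Nonempty ∧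
    IsMatchingOn (subPat M X) (pvs X) ∧ IsMatchingOn (subPat M Y) (pvs Y) ∧
    FeasiblePat (subPat M X) X ∧ FeasiblePat (subPat M Y) Y

/-- The number of interactions between index sets `X` and `Y` inside `[k]`. -/
def numInteractions (k : ℕ) (X Y : Finset ℕ) : ℕ :=
  ((Finset.Icc 1 (k - 1)).filter fun i =>
    (i ∈ X ∧ i + 1 ∈ Y) ∨ (i ∈ Y ∧ i + 1 ∈ X)).card

/-- The pattern obtained from `M` by swapping `i` and `i+1`: exchange the matching
partners of `2i−1` and `2i+1`, and exchange the matching partners of `2i` and `2i+2`. -/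
def swapAdjPat (M : Finset (Sym2 ℕ)) (i : ℕ) : Finset (Sym2 ℕ) :=
  M.image (Sym2.map fun m => Equiv.swap (2 * i - 1) (2 * i + 1) (Equiv.swap (2 * i) (2 * i + 2) m))

/-!  Swaps on a concrete Hamiltonian cycle, and how they fit into connection patterns.
The Hamiltonian cycle is given by an enumeration `cyc` of the vertices, bijective from
`{1, …, n}`; its edges in cyclic order are `e_i = {cyc i, cyc (i mod n + 1)}`. -/

/-- The `i`-th edge of the Hamiltonian cycle enumerated by `cyc`. -/
def cycEdge {V : Type} (cyc : ℕ → V) (n i : ℕ) : Sym2 V :=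
  s(cyc i, cyc (i % n + 1))

/-- The edge set of the Hamiltonian cycle enumerated by `cyc`. -/
def cycEdges {V : Type} [DecidableEq V] (cyc : ℕ → V) (n : ℕ) : Finset (Sym2 V) :=
  (Finset.Icc 1 n).image (cycEdge cyc n)

/-- Given an embedding `f`, the vertex of the Hamiltonian cycle corresponding to the
pattern vertex `m ∈ [2k]`: pattern vertex `2i−1` is the left endpoint `cyc (f i)` of the
deleted edge `e_{f i}`, and pattern vertex `2i` is its right endpoint. -/
def ptMap {V : Type} (cyc : ℕ → V) (n : ℕ) (f : ℕ → ℕ) (m : ℕ) : V :=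
  if m % 2 = 1 then cyc (f ((m + 1) / 2)) else cyc (f (m / 2) % n + 1)

/-- The pair `(f, N)` of an embedding and a connection pattern on index set `X` describes
the swap `(Em, Ep)`: `Em` consists of the cycle edges indexed by the image of `f`, and
`Ep` consists of the edges of `N` transported along the correspondence between pattern
vertices and endpoints of deleted edges. -/
def DescribedBy {V : Type} [DecidableEq V] (cyc : ℕ → V) (n : ℕ) (X : Finset ℕ)
    (f : ℕ → ℕ) (N : Finset (Sym2 ℕ)) (Em Ep : Finset (Sym2 V)) : Prop :=
  Em = X.image (fun i => cycEdge cyc n (f i)) ∧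
  Ep = N.image (Sym2.map (ptMap cyc n f))

/-- The swap `(Em, Ep)` fits into the connection pattern `N` on index set `X`: some
increasing embedding `f : X → [n]` together with `N` describes `(Em, Ep)`. -/
def FitsInto {V : Type} [DecidableEq V] (cyc : ℕ → V) (n : ℕ) (X : Finset ℕ)
    (N : Finset (Sym2 ℕ)) (Em Ep : Finset (Sym2 V)) : Prop :=
  ∃ f : ℕ → ℕ, StrictMonoOn f (X : Set ℕ) ∧ (∀ i ∈ X, f i ∈ Finset.Icc 1 n) ∧
    DescribedBy cyc n X f N Em Ep

/-- The multiset of endpoints of an unordered pair (a loop contributes its vertex twice). -/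
def Sym2.toMul {V : Type} : Sym2 V → Multiset V :=
  Sym2.lift ⟨fun a b => {a, b}, fun a b => Multiset.pair_comm a b⟩

/-- The multiset of endpoints of a multiset of edges. -/
def endpointsM {V : Type} (F : Multiset (Sym2 V)) : Multiset V :=
  F.bind Sym2.toMul

/-- A finite set `D` of unordered pairs of vertices forms a Hamiltonian cycle (on all of
`V`): it has no loops, every vertex lies on exactly two of its edges, and the graph it
spans is connected. -/
def IsHamCycleSet {V : Type} [Fintype V] [DecidableEq V] (D : Finset (Sym2 V)) : Prop :=
  (∀ e ∈ D, ¬ e.IsDiag) ∧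
  (∀ v : V, (D.filter fun e => v ∈ e).card = 2) ∧
  (SimpleGraph.fromEdgeSet (D : Set (Sym2 V))).Connected


def shiftP (n p m : ℕ) : ℕ := (p - 1 + m) % n + 1

lemma shiftP_le {n p m : ℕ} (hn : 1 ≤ n) : 1 ≤ shiftP n p m ∧ shiftP n p m ≤ n := by
  refine ⟨Nat.le_add_left _ _, ?_⟩
  have := Nat.mod_lt (p - 1 + m) (show 0 < n by omega)
  unfold shiftP; omega

lemma shiftP_zero {n p : ℕ} (hp : 1 ≤ p) (hpn : p ≤ n) : shiftP n p 0 = p := by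
  unfold shiftP
  rw [Nat.add_zero, Nat.mod_eq_of_lt (by omega)]; omega

lemma shiftP_one {n p : ℕ} (hp : 1 ≤ p) : shiftP n p 1 = p % n + 1 := by
  unfold shiftP; congr 2; omega

lemma shiftP_shiftP {n p a b : ℕ} (hp : 1 ≤ p) :
    shiftP n (shiftP n p a) b = shiftP n p (a + b) := by
  unfold shiftP
  rw [Nat.add_sub_cancel, Nat.mod_add_mod]
  congr 2; omega

lemma shiftP_reach {n p t : ℕ} (hp : 1 ≤ p) (hpn : p ≤ n) (ht : 1 ≤ t) (htn : t ≤ n) :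
    shiftP n p ((t + n - p) % n) = t := by
  unfold shiftP
  rw [Nat.add_mod_mod]
  have h1 : p - 1 + (t + n - p) = t - 1 + n := by omega
  rw [h1, Nat.add_mod_right, Nat.mod_eq_of_lt (by omega)]
  omega

lemma shiftP_inj_exp {n p a b : ℕ} (hp : 1 ≤ p) (h : shiftP n p a = shiftP n p b) :
    a % n = b % n := by
  unfold shiftP at h
  have h' : (p - 1 + a) % n = (p - 1 + b) % n := by omega
  have := (Nat.ModEq.add_left_cancel' (p - 1) h')
  exact this

lemma mod_inj_Icc {n a b : ℕ} (ha : 1 ≤ a) (han : a ≤ n) (hb : 1 ≤ b) (hbn : b ≤ n)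
    (h : a % n = b % n) : a = b := by
  rcases eq_or_lt_of_le han with rfl | h1
  · rcases eq_or_lt_of_le hbn with rfl | h2
    · rfl
    · rw [Nat.mod_self, Nat.mod_eq_of_lt h2] at h; omega
  · rw [Nat.mod_eq_of_lt h1] at h
    rcases eq_or_lt_of_le hbn with rfl | h2
    · rw [Nat.mod_self] at h; omega
    · rw [Nat.mod_eq_of_lt h2] at h; omega

lemma shiftP_one_ne {n p : ℕ} (hn : 2 ≤ n) (hp : 1 ≤ p) (hpn : p ≤ n) :
    shiftP n p 1 ≠ p := by
  intro h
  have h2 : shiftP n p 1 = shiftP n p 0 := by rw [shiftP_zero hp hpn]; exact h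
  have := shiftP_inj_exp hp h2
  rw [Nat.mod_eq_of_lt (by omega), Nat.zero_mod] at this
  omega

lemma shiftP_two_ne {n p : ℕ} (hn : 3 ≤ n) (hp : 1 ≤ p) (hpn : p ≤ n) :
    shiftP n p 2 ≠ p := by
  intro h
  have h2 : shiftP n p 2 = shiftP n p 0 := by rw [shiftP_zero hp hpn]; exact h
  have := shiftP_inj_exp hp h2
  rw [Nat.mod_eq_of_lt (by omega), Nat.zero_mod] at this
  omega

open Finset in
lemma mem_pvs {X : Finset ℕ} {a : ℕ} : a ∈ pvs X ↔ ∃ i ∈ X, a = 2*i-1 ∨ a = 2*i := by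
  simp [pvs]

lemma pvs_card {X : Finset ℕ} (h1 : ∀ i ∈ X, 1 ≤ i) : (pvs X).card = 2 * X.card := by
  rw [pvs, Finset.card_biUnion]
  · rw [Finset.sum_congr rfl (g := fun _ => 2) (fun i hi => ?_), Finset.sum_const,
      smul_eq_mul, mul_comm]
    have := h1 i hi
    rw [Finset.card_insert_of_notMem (by simp; omega), Finset.card_singleton]
  · intro i hi j hj hij
    simp only [Function.onFun]
    rw [Finset.disjoint_left]
    intro a ha hb
    simp only [Finset.mem_insert, Finset.mem_singleton] at ha hb
    have := h1 i hi; have := h1 j hj; omega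

lemma matching_card {N : Finset (Sym2 ℕ)} {S : Finset ℕ} (h : IsMatchingOn N S) :
    S.card = 2 * N.card := by
  obtain ⟨hd, hsup, huniq⟩ := h
  have hS : S = N.biUnion (fun e => S.filter (· ∈ e)) := by
    ext v; simp only [Finset.mem_biUnion, Finset.mem_filter]
    constructor
    · intro hv; obtain ⟨e, ⟨he, hve⟩, -⟩ := huniq v hv; exact ⟨e, he, hv, hve⟩
    · rintro ⟨e, he, hv, -⟩; exact hv
  have hcard : ∀ e ∈ N, (S.filter (· ∈ e)).card = 2 := by
    intro e he
    induction e using Sym2.ind with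
    | _ x y =>
      have hxy : x ≠ y := fun hh => hd _ he (Sym2.mk_isDiag_iff.mpr hh)
      have hx : x ∈ S := hsup _ he x (Sym2.mem_iff.mpr (Or.inl rfl))
      have hy : y ∈ S := hsup _ he y (Sym2.mem_iff.mpr (Or.inr rfl))
      have : S.filter (· ∈ s(x,y)) = {x, y} := by
        ext v
        simp only [Finset.mem_filter, Sym2.mem_iff, Finset.mem_insert, Finset.mem_singleton]
        constructor
        · rintro ⟨-, hh⟩; exact hh
        · rintro (rfl|rfl); exacts [⟨hx, Or.inl rfl⟩, ⟨hy, Or.inr rfl⟩]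
      rw [this, Finset.card_insert_of_notMem (by simpa using hxy), Finset.card_singleton]
  conv_lhs => rw [hS]
  rw [Finset.card_biUnion, Finset.sum_congr rfl hcard, Finset.sum_const, smul_eq_mul, mul_comm]
  intro e he e' he' hee
  simp only [Function.onFun]
  rw [Finset.disjoint_left]
  intro v hv hv'
  rw [Finset.mem_filter] at hv hv'
  exact hee ((huniq v hv.1).unique ⟨he, hv.2⟩ ⟨he', hv'.2⟩)

lemma nextIn_mem {X : Finset ℕ} {i : ℕ} (hX : X.Nonempty) : nextIn X i ∈ X := by
  unfold nextIn
  split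
  · next h => exact Finset.filter_subset _ _ (Finset.min'_mem _ h)
  · exact Finset.min'_mem _ hX

lemma nextIn_ne {X : Finset ℕ} {l i : ℕ} (hl : l ∈ X) (hi : i ∈ X) (hli : l < i) :
    nextIn X l ≠ nextIn X i := by
  have hfil : (X.filter fun j => l < j).Nonempty := ⟨i, Finset.mem_filter.mpr ⟨hi, hli⟩⟩
  have h1 : nextIn X l = (X.filter fun j => l < j).min' hfil := by
    unfold nextIn; rw [dif_pos hfil]
  have hle : nextIn X l ≤ i := by
    rw [h1]; exact Finset.min'_le _ _ (Finset.mem_filter.mpr ⟨hi, hli⟩)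
  have hgt : l < nextIn X l := by
    rw [h1]; exact (Finset.mem_filter.mp (Finset.min'_mem _ hfil)).2
  by_cases hfil2 : (X.filter fun j => i < j).Nonempty
  · have h3 : i < nextIn X i := by
      have h2 : nextIn X i = (X.filter fun j => i < j).min' hfil2 := by
        unfold nextIn; rw [dif_pos hfil2]
      rw [h2]; exact (Finset.mem_filter.mp (Finset.min'_mem _ hfil2)).2
    omega
  · have h3 : nextIn X i ≤ l := by
      have h2 : nextIn X i = X.min' ⟨l, hl⟩ := by
        unfold nextIn; rw [dif_neg hfil2, dif_pos ⟨l, hl⟩]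
      rw [h2]; exact Finset.min'_le _ _ hl
    omega

lemma reach_closed {α : Type} {G : SimpleGraph α} {S : Set α}
    (hS : ∀ a b, G.Adj a b → a ∈ S → b ∈ S) {u v : α}
    (h : G.Reachable u v) (hu : u ∈ S) : v ∈ S := by
  obtain ⟨w⟩ := h
  induction w with
  | nil => exact hu
  | cons h p ih => exact ih (hS _ _ h hu)

lemma seg_not_feasible {k : ℕ} {N : Finset (Sym2 ℕ)} {X : Finset ℕ} (hX : X ⊆ Finset.Icc 1 k)
    (hmat : IsMatchingOn N (pvs X)) {i : ℕ} (hi : i ∈ X) (hij : i ≠ nextIn X i)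
    (hmem : s(2*i, 2*(nextIn X i)-1) ∈ N) (hfeas : FeasiblePat N X) : False := by
  set j := nextIn X i with hj
  have hjX : j ∈ X := nextIn_mem ⟨i, hi⟩
  have hi1 : 1 ≤ i := (Finset.mem_Icc.mp (hX hi)).1
  have hj1 : 1 ≤ j := (Finset.mem_Icc.mp (hX hjX)).1
  have h2i : (2*i : ℕ) ∈ pvs X := mem_pvs.mpr ⟨i, hi, Or.inr rfl⟩
  have h2j : (2*j : ℕ) ∈ pvs X := mem_pvs.mpr ⟨j, hjX, Or.inr rfl⟩
  have hreach := hfeas _ h2i _ h2j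
  have hnl1 : ∀ l ∈ X, 1 ≤ nextIn X l := fun l hl =>
    (Finset.mem_Icc.mp (hX (nextIn_mem ⟨l, hl⟩))).1
  have hS : (2*j : ℕ) ∈ ({2*i, 2*j-1} : Set ℕ) := by
    refine reach_closed ?_ hreach (by left; rfl)
    intro a b hadj haS
    rw [SimpleGraph.fromEdgeSet_adj] at hadj
    obtain ⟨hab, hne⟩ := hadj
    rw [Finset.mem_coe, Finset.mem_union] at hab
    rcases hab with hab | hab
    · have haP : a ∈ pvs X := by
        rcases haS with rfl|rfl
        exacts [h2i, mem_pvs.mpr ⟨j, hjX, Or.inl rfl⟩]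
      have hain : a ∈ s(2*i, 2*j-1) := by
        rcases haS with rfl|rfl
        exacts [Sym2.mem_iff.mpr (Or.inl rfl), Sym2.mem_iff.mpr (Or.inr rfl)]
      have h1 : s(a,b) = s(2*i, 2*j-1) :=
        (hmat.2.2 a haP).unique ⟨hab, Sym2.mem_iff.mpr (Or.inl rfl)⟩ ⟨hmem, hain⟩
      have hb : b ∈ s(2*i, 2*j-1) := h1 ▸ Sym2.mem_iff.mpr (Or.inr rfl)
      rcases Sym2.mem_iff.mp hb with rfl|rfl
      · left; rfl
      · right; rfl
    · rw [segEdges, Finset.mem_image] at hab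
      obtain ⟨l, hlX, hl⟩ := hab
      have hl1 : 1 ≤ l := (Finset.mem_Icc.mp (hX hlX)).1
      have hnl : 1 ≤ nextIn X l := hnl1 l hlX
      rcases haS with rfl|rfl
      · rcases Sym2.eq_iff.mp hl with ⟨h1, h2⟩ | ⟨h1, h2⟩
        · have : l = i := by omega
          subst this
          right; rw [← h2]; rfl
        · omega
      · rcases Sym2.eq_iff.mp hl with ⟨h1, h2⟩ | ⟨h1, h2⟩
        · omega
        · have hlj : nextIn X l = j := by omega
          have hli : l = i := by
            by_contra hne2
            rcases lt_trichotomy l i with hlt | heq | hgt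
            · exact nextIn_ne hlX hi hlt (hj ▸ hlj)
            · exact hne2 heq
            · exact nextIn_ne hi hlX hgt (hj ▸ hlj).symm
          left; rw [← h1, hli]
  rcases hS with h|h
  · omega
  · simp only [Set.mem_singleton_iff] at h; omega


lemma first_unique {P : ℕ → Prop} {m1 m2 : ℕ} (hm1 : 1 ≤ m1) (h1 : P m1)
    (h1' : ∀ l, 1 ≤ l → l < m1 → ¬ P l) (hm2 : 1 ≤ m2) (h2 : P m2)
    (h2' : ∀ l, 1 ≤ l → l < m2 → ¬ P l) : m1 = m2 := by
  rcases lt_trichotomy m1 m2 with h|h|h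
  · exact absurd h1 (h2' _ hm1 h)
  · exact h
  · exact absurd h2 (h1' _ hm2 h)

lemma canonical_next {n k : ℕ} {f : ℕ → ℕ}
    (hf : StrictMonoOn f ((Finset.Icc 1 k : Finset ℕ) : Set ℕ))
    (hfr : ∀ i ∈ Finset.Icc 1 k, f i ∈ Finset.Icc 1 n) {X : Finset ℕ}
    (hX : X ⊆ Finset.Icc 1 k) {i : ℕ} (hi : i ∈ X) :
    ∃ m, 1 ≤ m ∧ shiftP n (f i) m = f (nextIn X i) ∧
      ∀ l, 1 ≤ l → l < m → shiftP n (f i) l ∉ X.image f := by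
  have hmem : ∀ x ∈ X, x ∈ ((Finset.Icc 1 k : Finset ℕ) : Set ℕ) :=
    fun x hx => Finset.mem_coe.mpr (hX hx)
  have hb : ∀ x ∈ X, 1 ≤ f x ∧ f x ≤ n := fun x hx => Finset.mem_Icc.mp (hfr x (hX hx))
  have hfi := hb i hi
  by_cases hfil : (X.filter fun j => i < j).Nonempty
  · set j := (X.filter fun j => i < j).min' hfil with hjdef
    have hjX : j ∈ X := Finset.filter_subset _ _ (Finset.min'_mem _ hfil)
    have hij : i < j := (Finset.mem_filter.mp (Finset.min'_mem _ hfil)).2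
    have hjmin : ∀ x ∈ X, i < x → j ≤ x := fun x hx h =>
      Finset.min'_le _ _ (Finset.mem_filter.mpr ⟨hx, h⟩)
    have hnj : nextIn X i = j := by unfold nextIn; rw [dif_pos hfil]
    have hfj := hb j hjX
    have hflt : f i < f j := hf (hmem _ hi) (hmem _ hjX) hij
    refine ⟨f j - f i, by omega, ?_, ?_⟩
    · rw [hnj]; unfold shiftP
      have h3 : f i - 1 + (f j - f i) = f j - 1 := by omega
      rw [h3, Nat.mod_eq_of_lt (by omega)]; omega
    · intro l hl1 hl2 hmem'
      rw [Finset.mem_image] at hmem'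
      obtain ⟨x, hx, hfx⟩ := hmem'
      unfold shiftP at hfx
      rw [show f i - 1 + l = f i + l - 1 by omega, Nat.mod_eq_of_lt (by omega)] at hfx
      have hfx' : f x = f i + l := by omega
      have hxb := hb x hx
      have hxgt : i < x := (hf.lt_iff_lt (hmem _ hi) (hmem _ hx)).mp (by omega)
      have h6 : j ≤ x := hjmin x hx hxgt
      have h7 : f j ≤ f x := (hf.le_iff_le (hmem _ hjX) (hmem _ hx)).mpr h6
      omega
  · have hall : ∀ x ∈ X, x ≤ i := by
      intro x hx
      by_contra h
      exact hfil ⟨x, Finset.mem_filter.mpr ⟨hx, by omega⟩⟩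
    have hXne : X.Nonempty := ⟨i, hi⟩
    set j := X.min' hXne with hjdef
    have hjX : j ∈ X := Finset.min'_mem _ hXne
    have hnj : nextIn X i = j := by
      unfold nextIn; rw [dif_neg hfil, dif_pos hXne]
    have hfj := hb j hjX
    have hji : j ≤ i := Finset.min'_le _ _ hi
    have hjmin : ∀ x ∈ X, j ≤ x := fun x hx => Finset.min'_le _ _ hx
    have hfji : f j ≤ f i := (hf.le_iff_le (hmem _ hjX) (hmem _ hi)).mpr hji
    refine ⟨n - f i + f j, by omega, ?_, ?_⟩
    · rw [hnj]; unfold shiftP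
      have h4 : f i - 1 + (n - f i + f j) = f j - 1 + n := by omega
      rw [h4, Nat.add_mod_right, Nat.mod_eq_of_lt (by omega)]; omega
    · intro l hl1 hl2 hmem'
      rw [Finset.mem_image] at hmem'
      obtain ⟨x, hx, hfx⟩ := hmem'
      unfold shiftP at hfx
      have hxb := hb x hx
      by_cases hc : f i + l ≤ n
      · rw [show f i - 1 + l = f i + l - 1 by omega, Nat.mod_eq_of_lt (by omega)] at hfx
        have h5 : f i < f x := by omega
        have h6 := (hf.lt_iff_lt (hmem _ hi) (hmem _ hx)).mp h5
        have := hall x hx; omega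
      · rw [show f i - 1 + l = (f i + l - 1 - n) + n by omega, Nat.add_mod_right,
          Nat.mod_eq_of_lt (by omega)] at hfx
        have h5 : f x < f j := by omega
        have h6 : f j ≤ f x := (hf.le_iff_le (hmem _ hjX) (hmem _ hx)).mpr (hjmin x hx)
        omega

lemma next_pos {n k : ℕ} {f : ℕ → ℕ}
    (hf : StrictMonoOn f ((Finset.Icc 1 k : Finset ℕ) : Set ℕ))
    (hfr : ∀ i ∈ Finset.Icc 1 k, f i ∈ Finset.Icc 1 n) {X : Finset ℕ}
    (hX : X ⊆ Finset.Icc 1 k) {i : ℕ} (hi : i ∈ X) {m : ℕ}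
    (hm : shiftP n (f i) (m+1) ∈ X.image f)
    (hmin : ∀ l, 1 ≤ l → l ≤ m → shiftP n (f i) l ∉ X.image f) :
    shiftP n (f i) (m+1) = f (nextIn X i) := by
  obtain ⟨m', hm'1, hm'2, hm'3⟩ := canonical_next hf hfr hX hi
  have heq : m + 1 = m' := first_unique (P := fun l => shiftP n (f i) l ∈ X.image f)
    (by omega) hm (fun l h1 h2 => hmin l h1 (by omega)) hm'1
    (by show shiftP n (f i) m' ∈ _; rw [hm'2]; exact Finset.mem_image_of_mem f (nextIn_mem ⟨i, hi⟩)) hm'3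
  rw [heq, hm'2]


lemma ptMap_odd {V : Type} (cyc : ℕ → V) (n : ℕ) (f : ℕ → ℕ) {i : ℕ} (hi : 1 ≤ i) :
    ptMap cyc n f (2*i-1) = cyc (f i) := by
  unfold ptMap
  rw [if_pos (by omega)]
  have h2 : (2*i-1+1)/2 = i := by omega
  rw [h2]

lemma ptMap_even {V : Type} (cyc : ℕ → V) (n : ℕ) (f : ℕ → ℕ) {i : ℕ} (hi : 1 ≤ i) :
    ptMap cyc n f (2*i) = cyc (f i % n + 1) := by
  unfold ptMap
  rw [if_neg (by omega)]
  have h2 : 2*i/2 = i := by omega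
  rw [h2]

lemma cycEdge_inj {V : Type} {cyc : ℕ → V} {n : ℕ} (hn : 3 ≤ n)
    (hcyc : Set.BijOn cyc (Set.Icc 1 n) Set.univ) {p q : ℕ}
    (hp1 : 1 ≤ p) (hpn : p ≤ n) (hq1 : 1 ≤ q) (hqn : q ≤ n)
    (h : cycEdge cyc n p = cycEdge cyc n q) : p = q := by
  have hinj := hcyc.injOn
  have hmem : ∀ r : ℕ, 1 ≤ r → r ≤ n → r ∈ Set.Icc 1 n := fun r h1 h2 => Set.mem_Icc.mpr ⟨h1, h2⟩
  have hstep : ∀ r : ℕ, r % n + 1 ∈ Set.Icc 1 n := fun r =>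
    Set.mem_Icc.mpr ⟨by omega, by have := Nat.mod_lt r (show 0 < n by omega); omega⟩
  unfold cycEdge at h
  rcases Sym2.eq_iff.mp h with ⟨h1, h2⟩ | ⟨h1, h2⟩
  · exact hinj (hmem _ hp1 hpn) (hmem _ hq1 hqn) h1
  · have e1 : p = q % n + 1 := hinj (hmem _ hp1 hpn) (hstep _) h1
    have e2 : q = p % n + 1 := (hinj (hstep _) (hmem _ hq1 hqn) h2).symm
    rw [← shiftP_one hq1] at e1
    rw [← shiftP_one hp1] at e2
    rw [e2, shiftP_shiftP hp1] at e1
    exact absurd e1.symm (shiftP_two_ne hn hp1 hpn)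

lemma core_seg {n k : ℕ} {f : ℕ → ℕ} (hn3 : 3 ≤ n)
    (hf : StrictMonoOn f ((Finset.Icc 1 k : Finset ℕ) : Set ℕ))
    (hfr : ∀ i ∈ Finset.Icc 1 k, f i ∈ Finset.Icc 1 n)
    {X : Finset ℕ} (hX : X ⊆ Finset.Icc 1 k)
    {N : Finset (Sym2 ℕ)} (hmat : IsMatchingOn N (pvs X)) (hfeas : FeasiblePat N X)
    {u v : ℕ} (hu : u ∈ X) (hv : v ∈ X) (hedge : s(2*u, 2*v-1) ∈ N)
    (hcase : f v = shiftP n (f u) 1 ∨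
      (f v = shiftP n (f u) 2 ∧ shiftP n (f u) 1 ∉ X.image f)) : False := by
  have hcoe : ∀ x ∈ X, x ∈ ((Finset.Icc 1 k : Finset ℕ) : Set ℕ) :=
    fun x hx => Finset.mem_coe.mpr (hX hx)
  have hbu := Finset.mem_Icc.mp (hfr u (hX hu))
  have hnext : f v = f (nextIn X u) := by
    rcases hcase with h | ⟨h1, h2⟩
    · have h0 := next_pos hf hfr hX hu (m := 0)
        (by rw [show (0+1 : ℕ) = 1 from rfl, ← h]; exact Finset.mem_image_of_mem f hv)
        (fun l hl1 hl2 => absurd (le_trans hl1 hl2) (by omega))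
      rw [show (0+1 : ℕ) = 1 from rfl] at h0
      exact h.trans h0
    · have h0 := next_pos hf hfr hX hu (m := 1)
        (by rw [show (1+1 : ℕ) = 2 from rfl, ← h1]; exact Finset.mem_image_of_mem f hv)
        (fun l hl1 hl2 => by
          have : l = 1 := by omega
          subst this; exact h2)
      rw [show (1+1 : ℕ) = 2 from rfl] at h0
      exact h1.trans h0
  have hvni : v = nextIn X u :=
    hf.injOn (hcoe _ hv) (hcoe _ (nextIn_mem ⟨u, hu⟩)) hnext
  have hneq : u ≠ v := by
    rintro rfl
    rcases hcase with h | ⟨h1, _⟩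
    · exact shiftP_one_ne (by omega) hbu.1 hbu.2 h.symm
    · exact shiftP_two_ne hn3 hbu.1 hbu.2 h1.symm
  refine seg_not_feasible hX hmat hu ?_ ?_ hfeas
  · rw [← hvni]; exact hneq
  · rw [← hvni]; exact hedge

lemma no_map_loop {V : Type} {n k : ℕ} {cyc : ℕ → V} {f : ℕ → ℕ} (hn3 : 3 ≤ n)
    (hcyc : Set.BijOn cyc (Set.Icc 1 n) Set.univ)
    (hf : StrictMonoOn f ((Finset.Icc 1 k : Finset ℕ) : Set ℕ))
    (hfr : ∀ i ∈ Finset.Icc 1 k, f i ∈ Finset.Icc 1 n)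
    {X : Finset ℕ} (hX : X ⊆ Finset.Icc 1 k)
    {N : Finset (Sym2 ℕ)} (hmat : IsMatchingOn N (pvs X)) (hfeas : FeasiblePat N X)
    {e : Sym2 ℕ} (he : e ∈ N) : ¬ (Sym2.map (ptMap cyc n f) e).IsDiag := by
  induction e using Sym2.ind with
  | _ x y =>
  intro hdiag
  rw [Sym2.map_pair_eq, Sym2.mk_isDiag_iff] at hdiag
  have hxy : x ≠ y := fun h => hmat.1 _ he (Sym2.mk_isDiag_iff.mpr h)
  obtain ⟨i, hi, hxf⟩ := mem_pvs.mp (hmat.2.1 _ he x (Sym2.mem_iff.mpr (Or.inl rfl)))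
  obtain ⟨j, hj, hyf⟩ := mem_pvs.mp (hmat.2.1 _ he y (Sym2.mem_iff.mpr (Or.inr rfl)))
  have hcoe : ∀ x ∈ X, x ∈ ((Finset.Icc 1 k : Finset ℕ) : Set ℕ) :=
    fun x hx => Finset.mem_coe.mpr (hX hx)
  have hbi := Finset.mem_Icc.mp (hfr i (hX hi))
  have hbj := Finset.mem_Icc.mp (hfr j (hX hj))
  have hi1 : 1 ≤ i := (Finset.mem_Icc.mp (hX hi)).1
  have hj1 : 1 ≤ j := (Finset.mem_Icc.mp (hX hj)).1
  have hinj := hcyc.injOn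
  have hmem : ∀ r : ℕ, 1 ≤ r → r ≤ n → r ∈ Set.Icc 1 n := fun r h1 h2 => Set.mem_Icc.mpr ⟨h1, h2⟩
  have hstep : ∀ r : ℕ, r % n + 1 ∈ Set.Icc 1 n := fun r =>
    Set.mem_Icc.mpr ⟨by omega, by have := Nat.mod_lt r (show 0 < n by omega); omega⟩
  rcases hxf with rfl | rfl
  · rcases hyf with rfl | rfl
    · rw [ptMap_odd cyc n f hi1, ptMap_odd cyc n f hj1] at hdiag
      have h1 := hinj (hmem _ hbi.1 hbi.2) (hmem _ hbj.1 hbj.2) hdiag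
      have h2 : i = j := hf.injOn (hcoe _ hi) (hcoe _ hj) h1
      exact hxy (by omega)
    · rw [ptMap_odd cyc n f hi1, ptMap_even cyc n f hj1] at hdiag
      have h1 : f i = f j % n + 1 := hinj (hmem _ hbi.1 hbi.2) (hstep _) hdiag
      exact core_seg hn3 hf hfr hX hmat hfeas hj hi (by rw [Sym2.eq_swap]; exact he)
        (Or.inl (by rw [shiftP_one hbj.1]; exact h1))
  · rcases hyf with rfl | rfl
    · rw [ptMap_even cyc n f hi1, ptMap_odd cyc n f hj1] at hdiag
      have h1 : f j = f i % n + 1 := (hinj (hstep _) (hmem _ hbj.1 hbj.2) hdiag).symm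
      exact core_seg hn3 hf hfr hX hmat hfeas hi hj he
        (Or.inl (by rw [shiftP_one hbi.1]; exact h1))
    · rw [ptMap_even cyc n f hi1, ptMap_even cyc n f hj1] at hdiag
      have h1 : f i % n + 1 = f j % n + 1 := hinj (hstep _) (hstep _) hdiag
      have h2 : f i = f j := mod_inj_Icc hbi.1 hbi.2 hbj.1 hbj.2 (by omega)
      have h3 : i = j := hf.injOn (hcoe _ hi) (hcoe _ hj) h2
      exact hxy (by omega)

lemma no_collide {V : Type} {n k : ℕ} {cyc : ℕ → V} {f : ℕ → ℕ} (hn3 : 3 ≤ n)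
    (hcyc : Set.BijOn cyc (Set.Icc 1 n) Set.univ)
    (hf : StrictMonoOn f ((Finset.Icc 1 k : Finset ℕ) : Set ℕ))
    (hfr : ∀ i ∈ Finset.Icc 1 k, f i ∈ Finset.Icc 1 n)
    {X : Finset ℕ} (hX : X ⊆ Finset.Icc 1 k)
    {N : Finset (Sym2 ℕ)} (hmat : IsMatchingOn N (pvs X)) (hfeas : FeasiblePat N X)
    {e : Sym2 ℕ} (he : e ∈ N) {q : ℕ} (hq1 : 1 ≤ q) (hqn : q ≤ n)
    (hqP : q ∉ X.image f) (heq : Sym2.map (ptMap cyc n f) e = cycEdge cyc n q) : False := by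
  have hinj := hcyc.injOn
  have hmem : ∀ r : ℕ, 1 ≤ r → r ≤ n → r ∈ Set.Icc 1 n := fun r h1 h2 => Set.mem_Icc.mpr ⟨h1, h2⟩
  have hstep : ∀ r : ℕ, r % n + 1 ∈ Set.Icc 1 n := fun r =>
    Set.mem_Icc.mpr ⟨by omega, by have := Nat.mod_lt r (show 0 < n by omega); omega⟩
  have aux : ∀ x y : ℕ, s(x,y) ∈ N → ptMap cyc n f x = cyc q →
      ptMap cyc n f y = cyc (q % n + 1) → False := by
    intro x y hxy hx hy
    obtain ⟨i, hi, hxf⟩ := mem_pvs.mp (hmat.2.1 _ hxy x (Sym2.mem_iff.mpr (Or.inl rfl)))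
    obtain ⟨j, hj, hyf⟩ := mem_pvs.mp (hmat.2.1 _ hxy y (Sym2.mem_iff.mpr (Or.inr rfl)))
    have hbi := Finset.mem_Icc.mp (hfr i (hX hi))
    have hbj := Finset.mem_Icc.mp (hfr j (hX hj))
    have hi1 : 1 ≤ i := (Finset.mem_Icc.mp (hX hi)).1
    have hj1 : 1 ≤ j := (Finset.mem_Icc.mp (hX hj)).1
    rcases hxf with rfl | rfl
    · rw [ptMap_odd cyc n f hi1] at hx
      exact hqP (Finset.mem_image.mpr ⟨i, hi,
        hinj (hmem _ hbi.1 hbi.2) (hmem _ hq1 hqn) hx⟩)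
    · rw [ptMap_even cyc n f hi1] at hx
      have hqs : q = shiftP n (f i) 1 := by
        rw [shiftP_one hbi.1]
        exact (hinj (hstep _) (hmem _ hq1 hqn) hx).symm
      rcases hyf with rfl | rfl
      · rw [ptMap_odd cyc n f hj1] at hy
        have h1 : f j = q % n + 1 := hinj (hmem _ hbj.1 hbj.2) (hstep _) hy
        rw [← shiftP_one hq1, hqs, shiftP_shiftP hbi.1] at h1
        exact core_seg hn3 hf hfr hX hmat hfeas hi hj hxy
          (Or.inr ⟨h1, by rw [← hqs]; exact hqP⟩)
      · rw [ptMap_even cyc n f hj1] at hy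
        have h1 : f j % n + 1 = q % n + 1 := hinj (hstep _) (hstep _) hy
        have h2 : f j = q := mod_inj_Icc hbj.1 hbj.2 hq1 hqn (by omega)
        exact hqP (Finset.mem_image.mpr ⟨j, hj, h2⟩)
  induction e using Sym2.ind with
  | _ x y =>
  rw [Sym2.map_pair_eq] at heq
  unfold cycEdge at heq
  rcases Sym2.eq_iff.mp heq with ⟨h1, h2⟩ | ⟨h1, h2⟩
  · exact aux x y he h1 h2
  · exact aux y x (by rw [Sym2.eq_swap]; exact he) h2 h1


lemma filter_image_my {α β : Type} [DecidableEq α] [DecidableEq β] (s : Finset α) (g : α → β)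
    (p : β → Prop) [DecidablePred p] :
    (s.image g).filter p = (s.filter (fun a => p (g a))).image g := by
  ext a; simp only [Finset.mem_filter, Finset.mem_image]
  constructor
  · rintro ⟨⟨x, hx, rfl⟩, hp⟩; exact ⟨x, ⟨hx, hp⟩, rfl⟩
  · rintro ⟨x, ⟨hx, hp⟩, rfl⟩; exact ⟨⟨x, hx, rfl⟩, hp⟩

lemma filter_sdiff_my {α : Type} [DecidableEq α] (s t : Finset α) (p : α → Prop)
    [DecidablePred p] : (s \ t).filter p = s.filter p \ t.filter p := by
  ext a; simp only [Finset.mem_filter, Finset.mem_sdiff]; tauto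

lemma sym2_eq_of_mem {α : Type} {e : Sym2 α} {a b : α} (ha : a ∈ e) (hb : b ∈ e)
    (hab : a ≠ b) : e = s(a,b) := by
  induction e using Sym2.ind with
  | _ x y =>
    rcases Sym2.mem_iff.mp ha with rfl|rfl <;> rcases Sym2.mem_iff.mp hb with rfl|rfl
    · exact absurd rfl hab
    · rfl
    · exact Sym2.eq_swap
    · exact absurd rfl hab

lemma part_counts {V : Type} [DecidableEq V] {n k : ℕ} {cyc : ℕ → V} {f : ℕ → ℕ}
    (hn3 : 3 ≤ n) (hcyc : Set.BijOn cyc (Set.Icc 1 n) Set.univ)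
    (hf : StrictMonoOn f ((Finset.Icc 1 k : Finset ℕ) : Set ℕ))
    (hfr : ∀ i ∈ Finset.Icc 1 k, f i ∈ Finset.Icc 1 n)
    {X : Finset ℕ} (hX : X ⊆ Finset.Icc 1 k)
    {N : Finset (Sym2 ℕ)} (hmat : IsMatchingOn N (pvs X)) (hfeas : FeasiblePat N X)
    (hinjN : Set.InjOn (Sym2.map (ptMap cyc n f)) (N : Set (Sym2 ℕ))) (v : V) :
    ((X.image (fun i => cycEdge cyc n (f i))).filter (fun e => v ∈ e)).card =
    ((N.image (Sym2.map (ptMap cyc n f))).filter (fun e => v ∈ e)).card := by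
  classical
  have hinj := hcyc.injOn
  have hcoe : ∀ x ∈ X, x ∈ ((Finset.Icc 1 k : Finset ℕ) : Set ℕ) :=
    fun x hx => Finset.mem_coe.mpr (hX hx)
  have hmem : ∀ r : ℕ, 1 ≤ r → r ≤ n → r ∈ Set.Icc 1 n := fun r h1 h2 => Set.mem_Icc.mpr ⟨h1, h2⟩
  have hstep : ∀ r : ℕ, r % n + 1 ∈ Set.Icc 1 n := fun r =>
    Set.mem_Icc.mpr ⟨by omega, by have := Nat.mod_lt r (show 0 < n by omega); omega⟩
  have hb : ∀ x ∈ X, 1 ≤ f x ∧ f x ≤ n := fun x hx => Finset.mem_Icc.mp (hfr x (hX hx))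
  have hx1 : ∀ x ∈ X, 1 ≤ x := fun x hx => (Finset.mem_Icc.mp (hX hx)).1
  have hgInj : Set.InjOn (fun i => cycEdge cyc n (f i)) (X : Set ℕ) := by
    intro a ha b hb' h
    have haX := Finset.mem_coe.mp ha; have hbX := Finset.mem_coe.mp hb'
    have h1 := cycEdge_inj hn3 hcyc (hb _ haX).1 (hb _ haX).2 (hb _ hbX).1 (hb _ hbX).2 h
    exact hf.injOn (hcoe _ haX) (hcoe _ hbX) h1
  have hnotboth : ∀ i ∈ X, ¬(cyc (f i) = v ∧ cyc (f i % n + 1) = v) := by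
    rintro i hi ⟨hc1, hc2⟩
    have h1 : f i = f i % n + 1 := hinj (hmem _ (hb _ hi).1 (hb _ hi).2) (hstep _)
      (hc1.trans hc2.symm)
    rw [← shiftP_one (hb _ hi).1] at h1
    exact shiftP_one_ne (by omega) (hb _ hi).1 (hb _ hi).2 h1.symm
  rw [filter_image_my, filter_image_my,
    Finset.card_image_of_injOn (hgInj.mono (by exact_mod_cast Finset.filter_subset _ _)),
    Finset.card_image_of_injOn (hinjN.mono (by exact_mod_cast Finset.filter_subset _ _))]
  -- X' := X.filter (v ∈ cycEdge (f ·)), N' := N.filter (v ∈ map φ ·), Pv intermediate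
  have hcard1 : (X.filter (fun i => v ∈ cycEdge cyc n (f i))).card =
      ((pvs X).filter (fun a => ptMap cyc n f a = v)).card := by
    refine Finset.card_bij (fun i _ => if cyc (f i) = v then 2*i-1 else 2*i) ?_ ?_ ?_
    · intro i hi
      have hiX := (Finset.mem_filter.mp hi).1
      have hiv := (Finset.mem_filter.mp hi).2
      rw [Finset.mem_filter]
      by_cases hc : cyc (f i) = v
      · rw [if_pos hc]
        exact ⟨mem_pvs.mpr ⟨i, hiX, Or.inl rfl⟩, by rw [ptMap_odd cyc n f (hx1 _ hiX)]; exact hc⟩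
      · rw [if_neg hc]
        have : v = cyc (f i % n + 1) := by
          rcases Sym2.mem_iff.mp hiv with h|h
          · exact absurd h.symm hc
          · exact h
        exact ⟨mem_pvs.mpr ⟨i, hiX, Or.inr rfl⟩,
          by rw [ptMap_even cyc n f (hx1 _ hiX)]; exact this.symm⟩
    · intro i1 hi1 i2 hi2 heq
      have h1 := hx1 _ (Finset.mem_filter.mp hi1).1
      have h2 := hx1 _ (Finset.mem_filter.mp hi2).1
      by_cases hc1 : cyc (f i1) = v <;> by_cases hc2 : cyc (f i2) = v <;>
        simp only [if_pos, if_neg, hc1, hc2, if_true, if_false] at heq <;> omega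
    · intro a ha
      obtain ⟨haP, hav⟩ := Finset.mem_filter.mp ha
      obtain ⟨i, hiX, hform⟩ := mem_pvs.mp haP
      rcases hform with rfl | rfl
      · rw [ptMap_odd cyc n f (hx1 _ hiX)] at hav
        refine ⟨i, Finset.mem_filter.mpr ⟨hiX, (show v ∈ cycEdge cyc n (f i) from Sym2.mem_iff.mpr (Or.inl hav.symm))⟩, ?_⟩
        rw [if_pos hav]
      · rw [ptMap_even cyc n f (hx1 _ hiX)] at hav
        refine ⟨i, Finset.mem_filter.mpr ⟨hiX, (show v ∈ cycEdge cyc n (f i) from Sym2.mem_iff.mpr (Or.inr hav.symm))⟩, ?_⟩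
        rw [if_neg (fun hc => hnotboth i hiX ⟨hc, hav⟩)]
  have hcard2 : ((pvs X).filter (fun a => ptMap cyc n f a = v)).card =
      (N.filter (fun e => v ∈ Sym2.map (ptMap cyc n f) e)).card := by
    refine Finset.card_bij (fun a ha => (hmat.2.2 a
      (Finset.mem_filter.mp ha).1).choose) ?_ ?_ ?_
    · intro a ha
      obtain ⟨haP, hav⟩ := Finset.mem_filter.mp ha
      obtain ⟨⟨heN, hae⟩, -⟩ := (hmat.2.2 a haP).choose_spec
      exact Finset.mem_filter.mpr ⟨heN, Sym2.mem_map.mpr ⟨a, hae, hav⟩⟩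
    · intro a1 ha1 a2 ha2 heq
      by_contra hne
      dsimp only at heq
      obtain ⟨haP1, hav1⟩ := Finset.mem_filter.mp ha1
      obtain ⟨haP2, hav2⟩ := Finset.mem_filter.mp ha2
      obtain ⟨⟨heN1, hae1⟩, -⟩ := (hmat.2.2 a1 haP1).choose_spec
      obtain ⟨⟨heN2, hae2⟩, -⟩ := (hmat.2.2 a2 haP2).choose_spec
      rw [heq] at hae1
      have he2 := sym2_eq_of_mem hae1 hae2 hne
      have hdiag : (Sym2.map (ptMap cyc n f) ((hmat.2.2 a2 haP2).choose)).IsDiag := by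
        rw [he2, Sym2.map_pair_eq, Sym2.mk_isDiag_iff, hav1, hav2]
      exact no_map_loop hn3 hcyc hf hfr hX hmat hfeas heN2 hdiag
    · intro e he
      obtain ⟨heN, hev⟩ := Finset.mem_filter.mp he
      obtain ⟨a, hae, hav⟩ := Sym2.mem_map.mp hev
      have haP : a ∈ pvs X := hmat.2.1 _ heN a hae
      have haPv : a ∈ (pvs X).filter (fun a => ptMap cyc n f a = v) :=
        Finset.mem_filter.mpr ⟨haP, hav⟩
      refine ⟨a, haPv, ?_⟩
      obtain ⟨-, huniq⟩ := (hmat.2.2 a haP).choose_spec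
      exact (huniq e ⟨heN, hae⟩).symm
  rw [hcard1, hcard2]


lemma part_ham {V : Type} [Fintype V] [DecidableEq V] {n k : ℕ} {cyc : ℕ → V} {f : ℕ → ℕ}
    (hn3 : 3 ≤ n) (hcyc : Set.BijOn cyc (Set.Icc 1 n) Set.univ)
    (hham : IsHamCycleSet (cycEdges cyc n))
    (hf : StrictMonoOn f ((Finset.Icc 1 k : Finset ℕ) : Set ℕ))
    (hfr : ∀ i ∈ Finset.Icc 1 k, f i ∈ Finset.Icc 1 n)
    {X : Finset ℕ} (hX : X ⊆ Finset.Icc 1 k) (hXne : X.Nonempty)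
    {N : Finset (Sym2 ℕ)} (hmat : IsMatchingOn N (pvs X)) (hfeas : FeasiblePat N X)
    (hinjN : Set.InjOn (Sym2.map (ptMap cyc n f)) (N : Set (Sym2 ℕ))) :
    IsHamCycleSet ((cycEdges cyc n \ X.image (fun i => cycEdge cyc n (f i))) ∪
      N.image (Sym2.map (ptMap cyc n f))) := by
  classical
  set φ := ptMap cyc n f with hφ
  set EmX := X.image (fun i => cycEdge cyc n (f i)) with hEmX
  set EpX := N.image (Sym2.map φ) with hEpX
  set D := cycEdges cyc n with hD
  have hinj := hcyc.injOn
  have hmem : ∀ r : ℕ, 1 ≤ r → r ≤ n → r ∈ Set.Icc 1 n := fun r h1 h2 => Set.mem_Icc.mpr ⟨h1, h2⟩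
  have hb : ∀ x ∈ X, 1 ≤ f x ∧ f x ≤ n := fun x hx => Finset.mem_Icc.mp (hfr x (hX hx))
  have hx1 : ∀ x ∈ X, 1 ≤ x := fun x hx => (Finset.mem_Icc.mp (hX hx)).1
  set P := X.image f with hP
  have hPmem : ∀ q ∈ P, 1 ≤ q ∧ q ≤ n := by
    intro q hq; obtain ⟨x, hx, rfl⟩ := Finset.mem_image.mp hq; exact hb x hx
  -- basic edge facts
  have hEmD : EmX ⊆ D := by
    intro e he
    obtain ⟨i, hi, rfl⟩ := Finset.mem_image.mp he
    exact Finset.mem_image.mpr ⟨f i, hfr i (hX hi), rfl⟩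
  have hsurv : ∀ p : ℕ, 1 ≤ p → p ≤ n → p ∉ P → cycEdge cyc n p ∈ D \ EmX := by
    intro p h1 h2 h3
    rw [Finset.mem_sdiff]
    refine ⟨Finset.mem_image.mpr ⟨p, Finset.mem_Icc.mpr ⟨h1, h2⟩, rfl⟩, ?_⟩
    intro hc
    obtain ⟨i, hi, heq⟩ := Finset.mem_image.mp hc
    have := cycEdge_inj hn3 hcyc (hb i hi).1 (hb i hi).2 h1 h2 heq
    exact h3 (Finset.mem_image.mpr ⟨i, hi, this⟩)
  have hdisj : Disjoint (D \ EmX) EpX := by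
    rw [Finset.disjoint_left]
    intro e he hc
    obtain ⟨e0, he0, rfl⟩ := Finset.mem_image.mp hc
    obtain ⟨heD, heM⟩ := Finset.mem_sdiff.mp he
    obtain ⟨q, hq, heq⟩ := Finset.mem_image.mp heD
    have hq' := Finset.mem_Icc.mp hq
    have hqP : q ∉ P := by
      intro hc2
      obtain ⟨i, hi, rfl⟩ := Finset.mem_image.mp hc2
      exact heM (by rw [← heq]; exact Finset.mem_image.mpr ⟨i, hi, rfl⟩)
    exact absurd heq.symm (fun hh =>
      no_collide hn3 hcyc hf hfr hX hmat hfeas he0 hq'.1 hq'.2 hqP hh)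
  set G' := SimpleGraph.fromEdgeSet (((D \ EmX) ∪ EpX : Finset (Sym2 V)) : Set (Sym2 V))
    with hG'
  refine ⟨?_, ?_, ?_⟩
  · -- no diagonals
    intro e he
    rcases Finset.mem_union.mp he with he | he
    · exact hham.1 e (Finset.mem_sdiff.mp he).1
    · obtain ⟨e0, he0, rfl⟩ := Finset.mem_image.mp he
      exact no_map_loop hn3 hcyc hf hfr hX hmat hfeas he0
  · -- degrees
    intro v
    rw [Finset.filter_union, Finset.card_union_of_disjoint
      (Finset.disjoint_filter_filter hdisj), filter_sdiff_my,
      Finset.card_sdiff_of_subset (Finset.filter_subset_filter _ hEmD)]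
    have h2 := hham.2.1 v
    have hle : (EmX.filter (fun e => v ∈ e)).card ≤ 2 := by
      rw [← h2]; exact Finset.card_le_card (Finset.filter_subset_filter _ hEmD)
    have heq := part_counts hn3 hcyc hf hfr hX hmat hfeas hinjN v
    rw [← hEmX, ← hφ, ← hEpX] at heq
    omega
  · -- connectivity
    have hadjstep : ∀ p : ℕ, 1 ≤ p → p ≤ n → p ∉ P →
        G'.Adj (cyc p) (cyc (shiftP n p 1)) := by
      intro p h1 h2 h3
      rw [SimpleGraph.fromEdgeSet_adj]
      constructor
      · rw [Finset.mem_coe, Finset.mem_union]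
        left
        rw [shiftP_one h1]
        exact hsurv p h1 h2 h3
      · intro hc
        have hsb := shiftP_le (n := n) (p := p) (m := 1) (by omega)
        have := hinj (hmem _ h1 h2) (hmem _ hsb.1 hsb.2) hc
        exact shiftP_one_ne (by omega) h1 h2 this.symm
    have walkW : ∀ m : ℕ, ∀ p : ℕ, 1 ≤ p → p ≤ n → shiftP n p m ∈ P →
        (∀ l, l < m → shiftP n p l ∉ P) → G'.Reachable (cyc p) (cyc (shiftP n p m)) := by
      intro m
      induction m with
      | zero =>
        intro p h1 h2 _ _
        rw [shiftP_zero h1 h2]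
      | succ m ih =>
        intro p h1 h2 h3 h4
        have hp0 : p ∉ P := by
          have := h4 0 (Nat.succ_pos m); rwa [shiftP_zero h1 h2] at this
        have hsb := shiftP_le (n := n) (p := p) (m := 1) (by omega)
        refine (hadjstep p h1 h2 hp0).reachable.trans ?_
        have h5 : shiftP n p (m+1) = shiftP n (shiftP n p 1) m := by
          rw [shiftP_shiftP h1]; congr 1; omega
        rw [h5]
        refine ih (shiftP n p 1) hsb.1 hsb.2 ?_ ?_
        · rw [shiftP_shiftP h1, show 1 + m = m + 1 by omega]; exact h3
        · intro l hl
          rw [shiftP_shiftP h1]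
          exact h4 (1 + l) (by omega)
    have hfirst : ∀ p : ℕ, 1 ≤ p → p ≤ n →
        ∃ m, shiftP n p m ∈ P ∧ ∀ l, l < m → shiftP n p l ∉ P := by
      intro p h1 h2
      obtain ⟨x0, hx0⟩ := hXne
      have ht := hb x0 hx0
      have hex : ∃ m, shiftP n p m ∈ P :=
        ⟨(f x0 + n - p) % n, by
          rw [shiftP_reach h1 h2 ht.1 ht.2]; exact Finset.mem_image.mpr ⟨x0, hx0, rfl⟩⟩
      exact ⟨Nat.find hex, Nat.find_spec hex, fun l hl => Nat.find_min hex hl⟩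
    have hreachP : ∀ v : V, ∃ i ∈ X, G'.Reachable v (cyc (f i)) := by
      intro v
      obtain ⟨p, hp, rfl⟩ := hcyc.surjOn (Set.mem_univ v)
      rw [Set.mem_Icc] at hp
      obtain ⟨m, hm1, hm2⟩ := hfirst p hp.1 hp.2
      obtain ⟨i, hi, heq⟩ := Finset.mem_image.mp hm1
      exact ⟨i, hi, by rw [heq]; exact walkW m p hp.1 hp.2 hm1 hm2⟩
    have hseg : ∀ i ∈ X, G'.Reachable (cyc (shiftP n (f i) 1)) (cyc (f (nextIn X i))) := by
      intro i hi
      have hbi := hb i hi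
      have hsb := shiftP_le (n := n) (p := f i) (m := 1) (by omega)
      obtain ⟨m, hm1, hm2⟩ := hfirst _ hsb.1 hsb.2
      have hnext : shiftP n (shiftP n (f i) 1) m = f (nextIn X i) := by
        have hres := next_pos hf hfr hX hi (m := m) ?_ ?_
        · rw [shiftP_shiftP hbi.1, show 1 + m = m + 1 by omega]; exact hres
        · rw [show m + 1 = 1 + m by omega, ← shiftP_shiftP hbi.1]; exact hm1
        · intro l hl1 hl2
          have := hm2 (l - 1) (by omega)
          rwa [shiftP_shiftP hbi.1, show 1 + (l-1) = l by omega] at this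
      rw [← hnext]
      exact walkW m _ hsb.1 hsb.2 hm1 hm2
    have htransfer : ∀ u w : ℕ,
        (SimpleGraph.fromEdgeSet ((N ∪ segEdges X : Finset (Sym2 ℕ)) : Set (Sym2 ℕ))).Reachable u w →
        G'.Reachable (φ u) (φ w) := by
      have hstep1 : ∀ a b : ℕ,
          (SimpleGraph.fromEdgeSet ((N ∪ segEdges X : Finset (Sym2 ℕ)) : Set (Sym2 ℕ))).Adj a b →
          G'.Reachable (φ a) (φ b) := by
        intro a b hadj
        rw [SimpleGraph.fromEdgeSet_adj] at hadj
        obtain ⟨hab, hne⟩ := hadj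
        rw [Finset.mem_coe, Finset.mem_union] at hab
        rcases hab with hab | hab
        · have hmem2 : s(φ a, φ b) ∈ EpX := by
            rw [← Sym2.map_pair_eq]
            exact Finset.mem_image_of_mem _ hab
          have hne2 : φ a ≠ φ b := by
            have := no_map_loop hn3 hcyc hf hfr hX hmat hfeas hab
            rw [Sym2.map_pair_eq, Sym2.mk_isDiag_iff] at this
            exact this
          exact (SimpleGraph.fromEdgeSet_adj _ |>.mpr
            ⟨Finset.mem_coe.mpr (Finset.mem_union_right _ hmem2), hne2⟩).reachable
        · rw [segEdges, Finset.mem_image] at hab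
          obtain ⟨i, hi, heq⟩ := hab
          have hi1 := hx1 i hi
          have hjX : nextIn X i ∈ X := nextIn_mem ⟨i, hi⟩
          have hj1 := hx1 _ hjX
          have hreach0 : G'.Reachable (φ (2*i)) (φ (2*(nextIn X i)-1)) := by
            rw [hφ, ptMap_even cyc n f hi1, ptMap_odd cyc n f hj1, ← shiftP_one (hb i hi).1]
            exact hseg i hi
          rcases Sym2.eq_iff.mp heq with ⟨h1, h2⟩ | ⟨h1, h2⟩
          · rw [← h1, ← h2]; exact hreach0
          · rw [← h1, ← h2]; exact hreach0.symm
      intro u w h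
      obtain ⟨wk⟩ := h
      induction wk with
      | nil => exact SimpleGraph.Reachable.refl _
      | cons hadj p ih => exact (hstep1 _ _ hadj).trans ih
    rw [SimpleGraph.connected_iff]
    refine ⟨?_, hham.2.2.nonempty⟩
    intro u w
    obtain ⟨i, hi, hu⟩ := hreachP u
    obtain ⟨j, hj, hw⟩ := hreachP w
    have hmid : G'.Reachable (cyc (f i)) (cyc (f j)) := by
      have hfe := hfeas (2*i-1) (mem_pvs.mpr ⟨i, hi, Or.inl rfl⟩)
        (2*j-1) (mem_pvs.mpr ⟨j, hj, Or.inl rfl⟩)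
      have := htransfer _ _ hfe
      rwa [hφ, ptMap_odd cyc n f (hx1 i hi), ptMap_odd cyc n f (hx1 j hj)] at this
    exact hu.trans (hmid.trans hw.symm)


lemma pvs_union (X Y : Finset ℕ) : pvs (X ∪ Y) = pvs X ∪ pvs Y := by
  ext a; simp only [pvs, Finset.mem_biUnion, Finset.mem_union]
  constructor
  · rintro ⟨i, hi | hi, h⟩
    exacts [Or.inl ⟨i, hi, h⟩, Or.inr ⟨i, hi, h⟩]
  · rintro (⟨i, hi, h⟩ | ⟨i, hi, h⟩)
    exacts [⟨i, Or.inl hi, h⟩, ⟨i, Or.inr hi, h⟩]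

/-- Let `cyc` enumerate a Hamiltonian cycle of an edge-weighted graph on `n` vertices and
suppose that for every `k' < k` there is no improving `k'`-move on it.  Then no improving
`k`-swap fits into a reducible connection `k`-pattern. -/
theorem no_improving_swap_fits_reducible {V : Type} [Fintype V] [DecidableEq V]
    (n k : ℕ) (cyc : ℕ → V) (w : Sym2 V → ℤ)
    (hn : n = Fintype.card V)
    (hcyc : Set.BijOn cyc (Set.Icc 1 n) Set.univ)
    (hham : IsHamCycleSet (cycEdges cyc n))
    (hno : ∀ k' < k, ∀ Fm Fp : Finset (Sym2 V),
      Fm ⊆ cycEdges cyc n → Fm.card = k' → Fp.card = k' →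
      IsHamCycleSet ((cycEdges cyc n \ Fm) ∪ Fp) →
      ¬ (∑ e ∈ Fp, w e < ∑ e ∈ Fm, w e)) :
    ∀ (M : Finset (Sym2 ℕ)) (Em Ep : Finset (Sym2 V)),
      IsMatchingOn M (pvs (Finset.Icc 1 k)) →
      Reducible M k →
      Em ⊆ cycEdges cyc n → Em.card = k → Ep.card = k →
      endpointsM Em.val = endpointsM Ep.val →
      FitsInto cyc n (Finset.Icc 1 k) M Em Ep →
      ¬ (∑ e ∈ Ep, w e < ∑ e ∈ Em, w e) := by
  classical
  intro M Em Ep hmatM hred hEmsub hEmcard hEpcard hend hfits hlt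
  obtain ⟨X, Y, hXY, hdisjXY, hXne, hYne, hmatX, hmatY, hfeasX, hfeasY⟩ := hred
  obtain ⟨f, hf, hfr, hEm, hEp⟩ := hfits
  have hXsub : X ⊆ Finset.Icc 1 k := hXY ▸ Finset.subset_union_left
  have hYsub : Y ⊆ Finset.Icc 1 k := hXY ▸ Finset.subset_union_right
  have hIcc1 : ∀ i ∈ Finset.Icc 1 k, 1 ≤ i := fun i hi => (Finset.mem_Icc.mp hi).1
  have hcardXY : X.card + Y.card = k := by
    rw [← Finset.card_union_of_disjoint hdisjXY, hXY, Nat.card_Icc]; omega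
  have hXpos : 1 ≤ X.card := Finset.card_pos.mpr hXne
  have hYpos : 1 ≤ Y.card := Finset.card_pos.mpr hYne
  have hk2 : 2 ≤ k := by omega
  have hDk : k ≤ (cycEdges cyc n).card := hEmcard ▸ Finset.card_le_card hEmsub
  have hn3 : 3 ≤ n := by
    by_contra hcon
    push_neg at hcon
    have hcle : (cycEdges cyc n).card ≤ n := by
      calc (cycEdges cyc n).card ≤ (Finset.Icc 1 n).card := Finset.card_image_le
        _ = n := by rw [Nat.card_Icc]; omega
    have hn2 : n = 2 := by omega
    subst hn2
    have hcle1 : (cycEdges cyc 2).card ≤ 1 := by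
      apply Finset.card_le_one.mpr
      intro a ha b hb
      obtain ⟨p, hp, rfl⟩ := Finset.mem_image.mp ha
      obtain ⟨q, hq, rfl⟩ := Finset.mem_image.mp hb
      obtain ⟨hp1, hp2⟩ := Finset.mem_Icc.mp hp
      obtain ⟨hq1, hq2⟩ := Finset.mem_Icc.mp hq
      have h12 : cycEdge cyc 2 1 = cycEdge cyc 2 2 := by
        show s(cyc 1, cyc (1 % 2 + 1)) = s(cyc 2, cyc (2 % 2 + 1))
        norm_num
      interval_cases p <;> interval_cases q <;> simp [h12]
    omega
  -- M has k edges, and the point map is injective on it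
  have hMcard : M.card = k := by
    have h1 := matching_card hmatM
    rw [pvs_card hIcc1, Nat.card_Icc] at h1
    omega
  have hinjM : Set.InjOn (Sym2.map (ptMap cyc n f)) (M : Set (Sym2 ℕ)) := by
    apply Finset.injOn_of_card_image_eq
    rw [← hEp, hEpcard, hMcard]
  have hsubX : subPat M X ⊆ M := Finset.filter_subset _ _
  have hsubY : subPat M Y ⊆ M := Finset.filter_subset _ _
  have hinjX : Set.InjOn (Sym2.map (ptMap cyc n f)) ((subPat M X : Set (Sym2 ℕ))) :=
    hinjM.mono (Finset.coe_subset.mpr hsubX)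
  have hinjY : Set.InjOn (Sym2.map (ptMap cyc n f)) ((subPat M Y : Set (Sym2 ℕ))) :=
    hinjM.mono (Finset.coe_subset.mpr hsubY)
  -- pvs X and pvs Y are disjoint, M splits into the two subpatterns
  have hpvs_disj : Disjoint (pvs X) (pvs Y) := by
    rw [Finset.disjoint_left]
    intro a haX haY
    obtain ⟨i, hiX, hif⟩ := mem_pvs.mp haX
    obtain ⟨j, hjY, hjf⟩ := mem_pvs.mp haY
    have hi1 := hIcc1 i (hXsub hiX)
    have hj1 := hIcc1 j (hYsub hjY)
    have hij : i = j := by omega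
    exact Finset.disjoint_left.mp hdisjXY hiX (hij ▸ hjY)
  have hMsplit : subPat M X ∪ subPat M Y = M := by
    apply Finset.Subset.antisymm
    · exact Finset.union_subset hsubX hsubY
    · intro e he
      have haux : ∀ x y : ℕ, s(x,y) = e → e ∈ subPat M X ∪ subPat M Y := by
        intro x y hxy
        have hxP : x ∈ pvs (Finset.Icc 1 k) :=
          hmatM.2.1 e he x (hxy ▸ Sym2.mem_iff.mpr (Or.inl rfl))
        rw [← hXY, pvs_union, Finset.mem_union] at hxP
        rcases hxP with hxP | hxP
        · obtain ⟨e', ⟨he'N, he'x⟩, -⟩ := hmatX.2.2 x hxP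
          have he'M : e' ∈ M := hsubX he'N
          have hx2 : x ∈ pvs (Finset.Icc 1 k) := by
            rw [← hXY, pvs_union, Finset.mem_union]; exact Or.inl hxP
          have : e = e' := by
            have hu := hmatM.2.2 x hx2
            exact (hu.unique ⟨he, hxy ▸ Sym2.mem_iff.mpr (Or.inl rfl)⟩ ⟨he'M, he'x⟩)
          rw [this]
          exact Finset.mem_union_left _ he'N
        · obtain ⟨e', ⟨he'N, he'x⟩, -⟩ := hmatY.2.2 x hxP
          have he'M : e' ∈ M := hsubY he'N
          have hx2 : x ∈ pvs (Finset.Icc 1 k) := by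
            rw [← hXY, pvs_union, Finset.mem_union]; exact Or.inr hxP
          have : e = e' := by
            have hu := hmatM.2.2 x hx2
            exact (hu.unique ⟨he, hxy ▸ Sym2.mem_iff.mpr (Or.inl rfl)⟩ ⟨he'M, he'x⟩)
          rw [this]
          exact Finset.mem_union_right _ he'N
      induction e using Sym2.ind with
      | _ x y => exact haux x y rfl
  have hsubdisj : Disjoint (subPat M X) (subPat M Y) := by
    rw [Finset.disjoint_left]
    intro e heX heY
    have h1 := (Finset.mem_filter.mp heX).2
    have h2 := (Finset.mem_filter.mp heY).2
    rw [Finset.mem_sym2_iff] at h1 h2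
    have hne : ¬ e.IsDiag := hmatX.1 e heX
    obtain ⟨x, hx⟩ : ∃ x, x ∈ e := by
      induction e using Sym2.ind with
      | _ x y => exact ⟨x, Sym2.mem_iff.mpr (Or.inl rfl)⟩
    exact Finset.disjoint_left.mp hpvs_disj (h1 x hx) (h2 x hx)
  -- cardinalities of the sub-patterns
  have hNXcard : (subPat M X).card = X.card := by
    have h1 := matching_card hmatX
    rw [pvs_card (fun i hi => hIcc1 i (hXsub hi))] at h1
    omega
  have hNYcard : (subPat M Y).card = Y.card := by
    have h1 := matching_card hmatY
    rw [pvs_card (fun i hi => hIcc1 i (hYsub hi))] at h1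
    omega
  -- the removed and added edge sets split
  set gg := fun i => cycEdge cyc n (f i) with hgg
  have hggInj : Set.InjOn gg ((Finset.Icc 1 k : Finset ℕ) : Set ℕ) := by
    intro a ha b hb h
    have haI := Finset.mem_coe.mp ha
    have hbI := Finset.mem_coe.mp hb
    have hba := Finset.mem_Icc.mp (hfr a haI)
    have hbb := Finset.mem_Icc.mp (hfr b hbI)
    have h1 := cycEdge_inj hn3 hcyc hba.1 hba.2 hbb.1 hbb.2 h
    exact hf.injOn ha hb h1
  have hEmsplit : X.image gg ∪ Y.image gg = Em := by
    rw [hEm, ← hXY, Finset.image_union]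
  have hEmdisj : Disjoint (X.image gg) (Y.image gg) := by
    rw [Finset.disjoint_left]
    intro e heX heY
    obtain ⟨i, hi, rfl⟩ := Finset.mem_image.mp heX
    obtain ⟨j, hj, hj2⟩ := Finset.mem_image.mp heY
    have : j = i := hggInj (Finset.mem_coe.mpr (hYsub hj)) (Finset.mem_coe.mpr (hXsub hi)) hj2
    exact Finset.disjoint_left.mp hdisjXY hi (this ▸ hj)
  have hEpsplit : (subPat M X).image (Sym2.map (ptMap cyc n f)) ∪
      (subPat M Y).image (Sym2.map (ptMap cyc n f)) = Ep := by
    rw [hEp]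
    conv_rhs => rw [← hMsplit, Finset.image_union]
  have hEpdisj : Disjoint ((subPat M X).image (Sym2.map (ptMap cyc n f)))
      ((subPat M Y).image (Sym2.map (ptMap cyc n f))) := by
    rw [Finset.disjoint_left]
    intro e heX heY
    obtain ⟨e1, he1, rfl⟩ := Finset.mem_image.mp heX
    obtain ⟨e2, he2, he2e⟩ := Finset.mem_image.mp heY
    have : e2 = e1 := hinjM (Finset.mem_coe.mpr (hsubY he2))
      (Finset.mem_coe.mpr (hsubX he1)) he2e
    exact Finset.disjoint_left.mp hsubdisj he1 (this ▸ he2)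
  -- apply the induction hypothesis to each part
  have hhamX := part_ham hn3 hcyc hham hf hfr hXsub hXne hmatX hfeasX hinjX
  have hhamY := part_ham hn3 hcyc hham hf hfr hYsub hYne hmatY hfeasY hinjY
  have hnoX := hno X.card (by omega) (X.image gg) ((subPat M X).image (Sym2.map (ptMap cyc n f)))
    (fun e he => hEmsub (hEmsplit ▸ Finset.mem_union_left _ he))
    (Finset.card_image_of_injOn (hggInj.mono (Finset.coe_subset.mpr hXsub)))
    (by rw [Finset.card_image_of_injOn hinjX, hNXcard])
    hhamX
  have hnoY := hno Y.card (by omega) (Y.image gg) ((subPat M Y).image (Sym2.map (ptMap cyc n f)))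
    (fun e he => hEmsub (hEmsplit ▸ Finset.mem_union_right _ he))
    (Finset.card_image_of_injOn (hggInj.mono (Finset.coe_subset.mpr hYsub)))
    (by rw [Finset.card_image_of_injOn hinjY, hNYcard])
    hhamY
  rw [not_lt] at hnoX hnoY
  rw [← hEmsplit, ← hEpsplit, Finset.sum_union hEmdisj, Finset.sum_union hEpdisj] at hlt
  omega
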